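/- For 0 < x < y < 1, the integral over z in (0,1) of 1/sqrt(|x-z|·|y-z|) dz equals π + 2·ln((sqrt(1-x) + sqrt(1-y)) / |sqrt(x) - sqrt(y)|). -/

import Mathlib

open Real MeasureTheory Set intervalIntegral

lemma aux_sqrtinv_int (c a b : ℝ) :
    IntervalIntegrable (fun z => (Real.sqrt |c - z|)⁻¹) volume a b := by
  have key : ∀ z : ℝ, (Real.sqrt |c - z|)⁻¹
      = (c - z) ^ (-(1/2) : ℝ) + (z - c) ^ (-(1/2) : ℝ) := by
    intro z
    have hzero : ∀ t : ℝ, t < 0 → t ^ (-(1/2) : ℝ) = 0 := by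
      intro t ht
      rw [Real.rpow_def_of_neg ht, show (-(1/2) : ℝ) * π = -(π/2) by ring,
        Real.cos_neg, Real.cos_pi_div_two, mul_zero]
    have hpos : ∀ t : ℝ, 0 < t → (Real.sqrt t)⁻¹ = t ^ (-(1/2) : ℝ) := by
      intro t ht
      rw [Real.rpow_neg ht.le, Real.sqrt_eq_rpow]
    rcases lt_trichotomy z c with h | h | h
    · rw [abs_of_pos (by linarith), hpos _ (by linarith), hzero (z - c) (by linarith), add_zero]
    · subst h; simp [Real.zero_rpow (by norm_num : (-(1/2):ℝ) ≠ 0)]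
    · rw [abs_of_neg (by linarith), neg_sub, hpos (z - c) (by linarith), hzero (c - z) (by linarith), zero_add]
  simp only [key]
  apply IntervalIntegrable.add
  · have h := (intervalIntegral.intervalIntegrable_rpow' (a := c - a) (b := c - b)
      (r := -(1/2)) (by norm_num)).comp_sub_left c
    simpa using h
  · have h := (intervalIntegral.intervalIntegrable_rpow' (a := a - c) (b := b - c)
      (r := -(1/2)) (by norm_num)).comp_sub_right c
    simpa using h

lemma aux_int (c d a b ε : ℝ) (hε : 0 < ε) (hb : ∀ z ∈ Set.uIcc a b, ε ≤ |d - z|) :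
    IntervalIntegrable (fun z => (Real.sqrt (|c - z| * |d - z|))⁻¹) volume a b := by
  have hg : IntervalIntegrable (fun z => (Real.sqrt ε)⁻¹ * (Real.sqrt |c - z|)⁻¹) volume a b :=
    (aux_sqrtinv_int c a b).const_mul _
  apply hg.mono_fun'
  · apply Measurable.aestronglyMeasurable
    apply Measurable.inv
    exact (Real.continuous_sqrt.comp
      (((continuous_const.sub continuous_id).abs.mul
        (continuous_const.sub continuous_id).abs))).measurable
  · filter_upwards [ae_restrict_mem measurableSet_uIoc] with z hz
    have hz' : z ∈ Set.uIcc a b := Set.uIoc_subset_uIcc hz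
    have h1 : Real.sqrt ε ≤ Real.sqrt |d - z| := Real.sqrt_le_sqrt (hb z hz')
    have h2 : 0 < Real.sqrt ε := Real.sqrt_pos.2 hε
    have h3 : (Real.sqrt |d - z|)⁻¹ ≤ (Real.sqrt ε)⁻¹ := by
      apply inv_anti₀ h2 h1
    rw [Real.norm_eq_abs, abs_of_nonneg (by positivity),
      Real.sqrt_mul (abs_nonneg _), mul_inv, mul_comm ((Real.sqrt ε)⁻¹)]
    exact mul_le_mul_of_nonneg_left h3 (by positivity)

lemma aux_right (a b u : ℝ) (hab : a < b) (hbu : b ≤ u)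
    (hint : IntervalIntegrable (fun z => (Real.sqrt ((z - a) * (z - b)))⁻¹) volume b u) :
    ∫ z in b..u, (Real.sqrt ((z - a) * (z - b)))⁻¹
      = 2 * Real.log (Real.sqrt (u - a) + Real.sqrt (u - b))
        - 2 * Real.log (Real.sqrt (b - a)) := by
  set F : ℝ → ℝ := fun z => 2 * Real.log (Real.sqrt (z - a) + Real.sqrt (z - b)) with hF
  have hcont : ContinuousOn F (Icc b u) := by
    apply continuousOn_const.mul
    apply ContinuousOn.log
    · exact ((Real.continuous_sqrt.comp (continuous_id.sub continuous_const)).add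
        (Real.continuous_sqrt.comp (continuous_id.sub continuous_const))).continuousOn
    · intro z hz
      have h1 : 0 < Real.sqrt (z - a) := Real.sqrt_pos.2 (by cases hz; linarith)
      have h2 : 0 ≤ Real.sqrt (z - b) := Real.sqrt_nonneg _
      positivity
  have hderiv : ∀ z ∈ Ioo b u, HasDerivAt F ((Real.sqrt ((z - a) * (z - b)))⁻¹) z := by
    intro z hz
    obtain ⟨hz1, hz2⟩ := hz
    have hza : 0 < z - a := by linarith
    have hzb : 0 < z - b := by linarith
    set A := Real.sqrt (z - a) with hA
    set B := Real.sqrt (z - b) with hB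
    have hApos : 0 < A := Real.sqrt_pos.2 hza
    have hBpos : 0 < B := Real.sqrt_pos.2 hzb
    have hdA : HasDerivAt (fun z => Real.sqrt (z - a)) (1 / (2 * A)) z := by
      have := (Real.hasDerivAt_sqrt hza.ne').comp z ((hasDerivAt_id z).sub_const a)
      simpa [Function.comp_def] using this
    have hdB : HasDerivAt (fun z => Real.sqrt (z - b)) (1 / (2 * B)) z := by
      have := (Real.hasDerivAt_sqrt hzb.ne').comp z ((hasDerivAt_id z).sub_const b)
      simpa [Function.comp_def] using this
    have hsum : 0 < A + B := by linarith
    have hlog := ((hdA.add hdB).log hsum.ne').const_mul (2:ℝ)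
    refine hlog.congr_deriv ?_
    rw [Real.sqrt_mul hza.le, ← hA, ← hB]
    simp only [Pi.add_apply]
    field_simp
    ring
  have := intervalIntegral.integral_eq_sub_of_hasDeriv_right_of_le hbu hcont
    (fun z hz => (hderiv z hz).hasDerivWithinAt) hint
  rw [this]
  simp only [hF, sub_self, Real.sqrt_zero, add_zero]

lemma aux_mid (x y : ℝ) (hxy : x < y)
    (hint : IntervalIntegrable (fun z => (Real.sqrt ((z - x) * (y - z)))⁻¹) volume x y) :
    ∫ z in x..y, (Real.sqrt ((z - x) * (y - z)))⁻¹ = π := by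
  have hyx : 0 < y - x := by linarith
  set F : ℝ → ℝ := fun z => 2 * Real.arcsin (Real.sqrt ((z - x) / (y - x))) with hF
  have hcont : ContinuousOn F (Icc x y) :=
    (continuous_const.mul (Real.continuous_arcsin.comp (Real.continuous_sqrt.comp
      ((continuous_id.sub continuous_const).div_const _)))).continuousOn
  have hderiv : ∀ z ∈ Ioo x y, HasDerivAt F ((Real.sqrt ((z - x) * (y - z)))⁻¹) z := by
    intro z hz
    obtain ⟨hz1, hz2⟩ := hz
    have hzx : 0 < z - x := by linarith
    have hyz : 0 < y - z := by linarith
    set u := (z - x) / (y - x) with hu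
    have hu0 : 0 < u := div_pos hzx hyx
    have hu1 : u < 1 := (div_lt_one hyx).2 (by linarith)
    have hs1 : Real.sqrt u < 1 := by
      rw [show (1:ℝ) = Real.sqrt 1 by simp]
      exact Real.sqrt_lt_sqrt hu0.le hu1
    have hs0 : 0 < Real.sqrt u := Real.sqrt_pos.2 hu0
    have hdin : HasDerivAt (fun z => Real.sqrt ((z - x) / (y - x)))
        (1 / (2 * Real.sqrt u) * (y - x)⁻¹) z := by
      have h1 : HasDerivAt (fun z : ℝ => (z - x) / (y - x)) ((y - x)⁻¹) z := by
        have := ((hasDerivAt_id z).sub_const x).div_const (y - x)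
        simpa [one_div] using this
      have := (Real.hasDerivAt_sqrt hu0.ne').comp z h1
      simpa [Function.comp_def] using this
    have harc := ((Real.hasDerivAt_arcsin (by linarith) hs1.ne).comp z hdin).const_mul (2:ℝ)
    refine harc.congr_deriv ?_
    have hsq : Real.sqrt u ^ 2 = u := Real.sq_sqrt hu0.le
    have h1mu : 1 - u = (y - z) / (y - x) := by rw [hu]; field_simp; ring
    set A := Real.sqrt (z - x) with hA
    set B := Real.sqrt (y - z) with hB
    set C := Real.sqrt (y - x) with hC
    have hApos : 0 < A := Real.sqrt_pos.2 hzx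
    have hBpos : 0 < B := Real.sqrt_pos.2 hyz
    have hCpos : 0 < C := Real.sqrt_pos.2 hyx
    have hsu : Real.sqrt ((z - x) / (y - x)) = A / C := Real.sqrt_div hzx.le _
    have hs2 : Real.sqrt ((y - z) / (y - x)) = B / C := Real.sqrt_div hyz.le _
    rw [hsq, h1mu, hs2, hu, hsu, Real.sqrt_mul hzx.le, ← hA, ← hB]
    have eC : C * C = y - x := Real.mul_self_sqrt hyx.le
    rw [← eC]
    field_simp
  have := intervalIntegral.integral_eq_sub_of_hasDeriv_right_of_le hxy.le hcont
    (fun z hz => (hderiv z hz).hasDerivWithinAt) hint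
  rw [this]
  simp only [hF, sub_self, zero_div, Real.sqrt_zero, Real.arcsin_zero, div_self hyx.ne',
    Real.sqrt_one, Real.arcsin_one]
  ring

lemma aux_left (a b l : ℝ) (hab : a < b) (hla : l ≤ a)
    (hint : IntervalIntegrable (fun z => (Real.sqrt ((a - z) * (b - z)))⁻¹) volume l a) :
    ∫ z in l..a, (Real.sqrt ((a - z) * (b - z)))⁻¹
      = 2 * Real.log (Real.sqrt (a - l) + Real.sqrt (b - l))
        - 2 * Real.log (Real.sqrt (b - a)) := by
  set F : ℝ → ℝ := fun z => -2 * Real.log (Real.sqrt (a - z) + Real.sqrt (b - z)) with hF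
  have hcont : ContinuousOn F (Icc l a) := by
    apply continuousOn_const.mul
    apply ContinuousOn.log
    · exact ((Real.continuous_sqrt.comp (continuous_const.sub continuous_id)).add
        (Real.continuous_sqrt.comp (continuous_const.sub continuous_id))).continuousOn
    · intro z hz
      have h1 : 0 < Real.sqrt (b - z) := Real.sqrt_pos.2 (by cases hz; linarith)
      have h2 : 0 ≤ Real.sqrt (a - z) := Real.sqrt_nonneg _
      positivity
  have hderiv : ∀ z ∈ Ioo l a, HasDerivAt F ((Real.sqrt ((a - z) * (b - z)))⁻¹) z := by
    intro z hz
    obtain ⟨hz1, hz2⟩ := hz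
    have hza : 0 < a - z := by linarith
    have hzb : 0 < b - z := by linarith
    set A := Real.sqrt (a - z) with hA
    set B := Real.sqrt (b - z) with hB
    have hApos : 0 < A := Real.sqrt_pos.2 hza
    have hBpos : 0 < B := Real.sqrt_pos.2 hzb
    have hdA : HasDerivAt (fun z => Real.sqrt (a - z)) (1 / (2 * A) * (-1)) z :=
      (Real.hasDerivAt_sqrt hza.ne').comp z ((hasDerivAt_id z).const_sub a)
    have hdB : HasDerivAt (fun z => Real.sqrt (b - z)) (1 / (2 * B) * (-1)) z :=
      (Real.hasDerivAt_sqrt hzb.ne').comp z ((hasDerivAt_id z).const_sub b)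
    have hsum : 0 < A + B := by linarith
    have hlog := ((hdA.add hdB).log hsum.ne').const_mul (-2:ℝ)
    refine hlog.congr_deriv ?_
    rw [Real.sqrt_mul hza.le, ← hA, ← hB]
    simp only [Pi.add_apply]
    field_simp
    ring
  have := intervalIntegral.integral_eq_sub_of_hasDeriv_right_of_le hla hcont
    (fun z hz => (hderiv z hz).hasDerivWithinAt) hint
  rw [this]
  simp only [hF, sub_self, Real.sqrt_zero, zero_add]
  ring

lemma int_congr {f g : ℝ → ℝ} {a b : ℝ} (hf : IntervalIntegrable f volume a b)
    (h : Set.EqOn f g (Set.uIcc a b)) : IntervalIntegrable g volume a b :=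
  hf.congr (by
    intro z hz
    exact h (Set.uIoc_subset_uIcc hz))

theorem stmt0 (x y : ℝ) (hx : 0 < x) (hxy : x < y) (hy : y < 1) :
    ∫ z in (0:ℝ)..1, 1 / Real.sqrt (|x - z| * |y - z|) =
      Real.pi + 2 * Real.log
        ((Real.sqrt (1 - x) + Real.sqrt (1 - y)) / |Real.sqrt x - Real.sqrt y|) := by
  have hyx : 0 < y - x := by linarith
  set f : ℝ → ℝ := fun z => (Real.sqrt (|x - z| * |y - z|))⁻¹ with hf
  set m : ℝ := (x + y) / 2 with hm
  -- integrability on the four subintervals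
  have i1 : IntervalIntegrable f volume 0 x := by
    apply aux_int x y 0 x (y - x) hyx
    intro z hz
    rw [Set.uIcc_of_le hx.le] at hz
    rw [abs_of_pos (by linarith [hz.2] : (0:ℝ) < y - z)]
    linarith [hz.2]
  have i2a : IntervalIntegrable f volume x m := by
    apply aux_int x y x m ((y - x) / 2) (by linarith)
    intro z hz
    rw [Set.uIcc_of_le (by rw [hm]; linarith)] at hz
    rw [abs_of_pos (by linarith [hz.2, hm ▸ hz.2] : (0:ℝ) < y - z)]
    have := hz.2; rw [hm] at this; linarith
  have i2b : IntervalIntegrable f volume m y := by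
    have h := aux_int y x m y ((y - x) / 2) (by linarith) ?_
    · exact h.congr (by intro z _; rw [hf]; ring_nf)
    intro z hz
    rw [Set.uIcc_of_le (by rw [hm]; linarith)] at hz
    have h1 := hz.1; rw [hm] at h1
    rw [abs_of_neg (by linarith : x - z < 0)]
    linarith
  have i2 : IntervalIntegrable f volume x y := i2a.trans i2b
  have i3 : IntervalIntegrable f volume y 1 := by
    have h := aux_int y x y 1 (y - x) hyx ?_
    · exact h.congr (by intro z _; rw [hf]; ring_nf)
    intro z hz
    rw [Set.uIcc_of_le hy.le] at hz
    rw [abs_of_neg (by linarith [hz.1] : x - z < 0)]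
    linarith [hz.1]
  -- nice forms on the three subintervals
  have e1 : Set.EqOn f (fun z => (Real.sqrt ((x - z) * (y - z)))⁻¹) (Set.uIcc 0 x) := by
    intro z hz
    rw [Set.uIcc_of_le hx.le] at hz
    show (Real.sqrt (|x - z| * |y - z|))⁻¹ = (Real.sqrt ((x - z) * (y - z)))⁻¹
    rw [abs_of_nonneg (by linarith [hz.2] : (0:ℝ) ≤ x - z),
      abs_of_nonneg (by linarith [hz.2] : (0:ℝ) ≤ y - z)]
  have e2 : Set.EqOn f (fun z => (Real.sqrt ((z - x) * (y - z)))⁻¹) (Set.uIcc x y) := by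
    intro z hz
    rw [Set.uIcc_of_le hxy.le] at hz
    show (Real.sqrt (|x - z| * |y - z|))⁻¹ = (Real.sqrt ((z - x) * (y - z)))⁻¹
    rw [abs_sub_comm x z,
      abs_of_nonneg (by linarith [hz.1] : (0:ℝ) ≤ z - x),
      abs_of_nonneg (by linarith [hz.2] : (0:ℝ) ≤ y - z)]
  have e3 : Set.EqOn f (fun z => (Real.sqrt ((z - x) * (z - y)))⁻¹) (Set.uIcc y 1) := by
    intro z hz
    rw [Set.uIcc_of_le hy.le] at hz
    show (Real.sqrt (|x - z| * |y - z|))⁻¹ = (Real.sqrt ((z - x) * (z - y)))⁻¹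
    rw [abs_sub_comm x z, abs_sub_comm y z,
      abs_of_nonneg (by linarith [hz.1] : (0:ℝ) ≤ z - x),
      abs_of_nonneg (by linarith [hz.1] : (0:ℝ) ≤ z - y)]
  -- piece values
  have p1 : ∫ z in (0:ℝ)..x, f z
      = 2 * Real.log (Real.sqrt x + Real.sqrt y) - 2 * Real.log (Real.sqrt (y - x)) := by
    rw [intervalIntegral.integral_congr e1]
    have := aux_left x y 0 hxy hx.le (int_congr i1 e1)
    simpa using this
  have p2 : ∫ z in x..y, f z = π := by
    rw [intervalIntegral.integral_congr e2]
    exact aux_mid x y hxy (int_congr i2 e2)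
  have p3 : ∫ z in y..(1:ℝ), f z
      = 2 * Real.log (Real.sqrt (1 - x) + Real.sqrt (1 - y))
        - 2 * Real.log (Real.sqrt (y - x)) := by
    rw [intervalIntegral.integral_congr e3]
    exact aux_right x y 1 hxy hy.le (int_congr i3 e3)
  -- assemble
  have split : ∫ z in (0:ℝ)..1, f z = (∫ z in (0:ℝ)..x, f z) + ((∫ z in x..y, f z) + ∫ z in y..(1:ℝ), f z) := by
    rw [intervalIntegral.integral_add_adjacent_intervals i2 i3,
      intervalIntegral.integral_add_adjacent_intervals i1 (i2.trans i3)]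
  have lhs_eq : ∫ z in (0:ℝ)..1, 1 / Real.sqrt (|x - z| * |y - z|) = ∫ z in (0:ℝ)..1, f z := by
    simp [hf, one_div]
  rw [lhs_eq, split, p1, p2, p3]
  -- final algebra
  have hsx : 0 < Real.sqrt x := Real.sqrt_pos.2 hx
  have hsy : 0 < Real.sqrt y := Real.sqrt_pos.2 (by linarith)
  have hsxy : Real.sqrt x < Real.sqrt y := Real.sqrt_lt_sqrt hx.le hxy
  have h1x : 0 < Real.sqrt (1 - x) := Real.sqrt_pos.2 (by linarith)
  have h1y : 0 ≤ Real.sqrt (1 - y) := Real.sqrt_nonneg _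
  have habs : |Real.sqrt x - Real.sqrt y| = Real.sqrt y - Real.sqrt x := by
    rw [abs_of_neg (by linarith)]; ring
  rw [habs, Real.log_div (by positivity) (by linarith), Real.log_sqrt hyx.le]
  have hmul : Real.log (y - x) = Real.log (Real.sqrt x + Real.sqrt y)
      + Real.log (Real.sqrt y - Real.sqrt x) := by
    rw [← Real.log_mul (by positivity) (by linarith)]
    congr 1
    have ex : Real.sqrt x * Real.sqrt x = x := Real.mul_self_sqrt hx.le
    have ey : Real.sqrt y * Real.sqrt y = y := Real.mul_self_sqrt (by linarith)
    nlinarith [ex, ey]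
  linarith [hmul]
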